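/- There exists a constant c > 0 such that for every positive integer n and every group G with exactly n distinct element-centralizers, the index of the center satisfies |G : Z(G)| ≤ c^{n−1}. -/

import Mathlib

/-- For a group `G`, the set of element-centralizers `{C_G(x) : x ∈ G}`. -/
def centralizersSet (G : Type*) [Group G] : Set (Subgroup G) :=
  {H : Subgroup G | ∃ x : G, H = Subgroup.centralizer {x}}

open Subgroup

section Aux

variable {G : Type*} [Group G]

/-- Translating by a central element does not change the centralizer. -/
lemma centralizer_mul_center (u z : G) (hz : z ∈ Subgroup.center G) :
    Subgroup.centralizer {u * z} = Subgroup.centralizer {u} := by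
  have hzc : ∀ c : G, c * z = z * c := fun c => Subgroup.mem_center_iff.mp hz c
  ext c
  simp only [Subgroup.mem_centralizer_iff, Set.mem_singleton_iff, forall_eq]
  constructor
  · intro h
    have h' : (u * c) * z = (c * u) * z := by
      calc (u * c) * z = u * (c * z) := by rw [mul_assoc]
        _ = u * (z * c) := by rw [hzc c]
        _ = (u * z) * c := by rw [mul_assoc]
        _ = c * (u * z) := h
        _ = (c * u) * z := by rw [mul_assoc]
    exact mul_right_cancel h'
  · intro h
    calc (u * z) * c = u * (z * c) := by rw [mul_assoc]
      _ = u * (c * z) := by rw [← hzc c]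
      _ = (u * c) * z := by rw [mul_assoc]
      _ = (c * u) * z := by rw [h]
      _ = c * (u * z) := by rw [mul_assoc]

lemma self_mem_centralizer (u : G) : u ∈ Subgroup.centralizer {u} := by
  rw [Subgroup.mem_centralizer_iff]
  rintro h rfl
  rfl

/-- A counting lemma : a finite union of sets of cardinality at most `s`,
indexed by a finite set `O`, has cardinality at most `O.ncard * s`. -/
lemma ncard_biUnion_le_mul {α β : Type*} {O : Set α} (hO : O.Finite) (f : α → Set β) (s : ℕ) :
    (∀ E ∈ O, (f E).ncard ≤ s) → (⋃ E ∈ O, f E).ncard ≤ O.ncard * s := by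
  refine Set.Finite.induction_on (motive := fun O _ => (∀ E ∈ O, (f E).ncard ≤ s) → (⋃ E ∈ O, f E).ncard ≤ O.ncard * s) O hO (fun _ => by simp) ?_
  intro a O' ha hO' ihh h
  rw [Set.biUnion_insert]
  calc (f a ∪ ⋃ E ∈ O', f E).ncard ≤ (f a).ncard + (⋃ E ∈ O', f E).ncard :=
        Set.ncard_union_le _ _
    _ ≤ s + O'.ncard * s := add_le_add (h a (Set.mem_insert _ _))
        (ihh fun E hE => h E (Set.mem_insert_of_mem _ hE))
    _ = (O'.ncard + 1) * s := by ring
    _ = (insert a O').ncard * s := by rw [Set.ncard_insert_of_notMem ha hO']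

/-- The image of a subgroup `E` in `G ⧸ Z(G)` has cardinality at most
the relative index `[E : Z(G) ∩ E]`. -/
lemma ncard_image_quot_le (E : Subgroup G) (hE : ((Subgroup.center G).subgroupOf E).index ≠ 0) :
    ((QuotientGroup.mk : G → G ⧸ Subgroup.center G) '' (E : Set G)).ncard ≤
      (Subgroup.center G).relIndex E := by
  set Z := Subgroup.center G
  have hfinq : Finite (↥E ⧸ Z.subgroupOf E) := Nat.finite_of_card_ne_zero hE
  set χ : (↥E ⧸ Z.subgroupOf E) → G ⧸ Z := fun zq =>
    Quotient.liftOn' zq (fun e : ↥E => (QuotientGroup.mk (e : G) : G ⧸ Z))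
      (by
        intro a b hab
        have h1 : (a : G)⁻¹ * (b : G) ∈ Z := by
          have := QuotientGroup.leftRel_apply.mp hab
          rwa [Subgroup.mem_subgroupOf, Subgroup.coe_mul, Subgroup.coe_inv] at this
        exact (QuotientGroup.eq).mpr h1) with hχ
  have hrange : (QuotientGroup.mk : G → G ⧸ Z) '' (E : Set G) = Set.range χ := by
    ext zq
    constructor
    · rintro ⟨e, he, rfl⟩
      exact ⟨Quotient.mk'' ⟨e, he⟩, rfl⟩
    · rintro ⟨w, rfl⟩
      induction w using Quotient.inductionOn' with
      | h e => exact ⟨(e : G), e.2, rfl⟩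
  rw [hrange, ← Nat.card_coe_set_eq]
  exact Nat.card_le_card_of_surjective (Set.rangeFactorization χ) Set.rangeFactorization_surjective

end Aux

/-- The key quantitative result: if `G` has a center of finite index `N ≠ 0`, and finitely many
element-centralizers, then `N ≤ 4 ^ (n - 1)` where `n` is the number of centralizers. -/
theorem key_bound : ∀ N : ℕ, ∀ (G : Type) [Group G],
    (Subgroup.center G).index = N → N ≠ 0 → (centralizersSet G).Finite →
    N ≤ 4 ^ ((centralizersSet G).ncard - 1) := by
  intro N
  induction N using Nat.strong_induction_on with
  | _ N ih =>
    intro G _ hN hN0 hfin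
    rcases eq_or_ne N 1 with h1 | h1
    · subst h1; exact Nat.one_le_pow _ _ (by norm_num)
    -- `G` is nonabelian
    have hZne : Subgroup.center G ≠ ⊤ := by
      intro h
      rw [h, Subgroup.index_top] at hN
      omega
    obtain ⟨x0, hx0⟩ : ∃ u : G, u ∉ Subgroup.center G := by
      by_contra h
      push_neg at h
      exact hZne ((Subgroup.eq_top_iff' _).mpr h)
    -- choose a noncentral element of minimal class size
    set S : Set ℕ :=
      {k | ∃ u : G, u ∉ Subgroup.center G ∧ (Subgroup.centralizer {u}).index = k} with hS
    have hSne : S.Nonempty := ⟨_, x0, hx0, rfl⟩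
    obtain ⟨x, hx, hxt⟩ : ∃ u : G, u ∉ Subgroup.center G ∧
        (Subgroup.centralizer {u}).index = sInf S := Nat.sInf_mem hSne
    set t := sInf S with ht
    set C := Subgroup.centralizer ({x} : Set G) with hC
    have hmin : ∀ y : G, y ∉ Subgroup.center G → t ≤ (Subgroup.centralizer {y}).index :=
      fun y hy => Nat.sInf_le ⟨y, hy, rfl⟩
    have hZC : Subgroup.center G ≤ C := Subgroup.center_le_centralizer _
    have hCdvd : C.index ∣ N := hN ▸ Subgroup.index_dvd_of_le hZC
    have ht0 : t ≠ 0 := by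
      rw [← hxt]
      intro h
      rw [h] at hCdvd
      exact hN0 (zero_dvd_iff.mp hCdvd)
    have htpos : 0 < t := Nat.pos_of_ne_zero ht0
    have htopC : C ≠ ⊤ := by
      intro h
      apply hx
      rw [Subgroup.mem_center_iff]
      intro g
      have hg : g ∈ C := by rw [h]; trivial
      exact (Subgroup.mem_centralizer_iff.mp hg x rfl).symm
    have ht1 : t ≠ 1 := fun h => htopC (Subgroup.index_eq_one.mp (by rw [hxt, h]))
    have ht2 : 2 ≤ t := by omega
    -- maximality of C among proper centralizers
    have hmax : ∀ y : G, y ∉ Subgroup.center G → C ≤ Subgroup.centralizer {y} →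
        Subgroup.centralizer {y} = C := by
      intro y hy hle
      have hd1 : (Subgroup.centralizer {y}).index ∣ C.index := Subgroup.index_dvd_of_le hle
      have hd2 : (Subgroup.centralizer {y}).index ≤ t := by
        rw [← hxt]
        exact Nat.le_of_dvd (hxt ▸ htpos) hd1
      have hd3 : (Subgroup.centralizer {y}).index = t := le_antisymm hd2 (hmin y hy)
      have hd4 : C.relIndex (Subgroup.centralizer {y}) * (Subgroup.centralizer {y}).index
          = C.index := Subgroup.relIndex_mul_index hle
      rw [hd3, hxt] at hd4
      have hd5 : C.relIndex (Subgroup.centralizer {y}) = 1 :=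
        Nat.eq_of_mul_eq_mul_right htpos (hd4.trans (one_mul t).symm)
      exact le_antisymm (Subgroup.relIndex_eq_one.mp hd5) hle
    -- the subgroup A = C_G(C) = Z(C)
    set A := Subgroup.centralizer (C : Set G) with hA
    have hxC : x ∈ C := self_mem_centralizer x
    have hAC : A ≤ C := by
      intro a ha
      rw [hC, Subgroup.mem_centralizer_iff]
      rintro h rfl
      exact Subgroup.mem_centralizer_iff.mp ha _ hxC
    have hxA : x ∈ A := by
      rw [hA, Subgroup.mem_centralizer_iff]
      intro c hc
      exact (Subgroup.mem_centralizer_iff.mp hc x rfl).symm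
    have hZA : Subgroup.center G ≤ A := by
      intro z hz
      rw [hA, Subgroup.mem_centralizer_iff]
      intro c _
      exact Subgroup.mem_center_iff.mp hz c
    -- L1: noncentral elements of A have centralizer exactly C
    have hL1 : ∀ a : G, a ∈ A → a ∉ Subgroup.center G → Subgroup.centralizer {a} = C := by
      intro a haA haZ
      refine hmax a haZ ?_
      intro c hc
      rw [Subgroup.mem_centralizer_iff]
      rintro h rfl
      exact (Subgroup.mem_centralizer_iff.mp haA c hc).symm
    -- the two families of centralizers
    set I : Set (Subgroup G) :=
      {H | ∃ y : G, y ∈ C ∧ H = Subgroup.centralizer {y}} with hI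
    set O : Set (Subgroup G) :=
      {H | ∃ y : G, y ∉ C ∧ H = Subgroup.centralizer {y}} with hO
    have hIsub : I ⊆ centralizersSet G := by
      rintro E ⟨y, _, rfl⟩
      exact ⟨y, rfl⟩
    have hOsub : O ⊆ centralizersSet G := by
      rintro E ⟨y, _, rfl⟩
      exact ⟨y, rfl⟩
    have hIfin : I.Finite := hfin.subset hIsub
    have hOfin : O.Finite := hfin.subset hOsub
    have hunion : centralizersSet G = I ∪ O := by
      ext E
      constructor
      · rintro ⟨y, rfl⟩
        by_cases h : y ∈ C
        · exact Or.inl ⟨y, h, rfl⟩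
        · exact Or.inr ⟨y, h, rfl⟩
      · rintro (⟨y, _, rfl⟩ | ⟨y, _, rfl⟩) <;> exact ⟨y, rfl⟩
    -- disjointness of the two families
    have hdisj : Disjoint I O := by
      rw [Set.disjoint_left]
      rintro E ⟨y, hy, rfl⟩ ⟨w, hw, hEw⟩
      -- x commutes with y since y ∈ C
      have hxy : x ∈ Subgroup.centralizer {y} := by
        rw [Subgroup.mem_centralizer_iff]
        rintro h rfl
        exact (Subgroup.mem_centralizer_iff.mp hy x rfl).symm
      rw [hEw] at hxy
      -- hence x commutes with w, so w ∈ C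
      have hwC : w ∈ C := by
        rw [hC, Subgroup.mem_centralizer_iff]
        rintro h rfl
        exact (Subgroup.mem_centralizer_iff.mp hxy w rfl).symm
      exact hw hwC
    set m := I.ncard with hm
    set r := O.ncard with hr
    have hn : (centralizersSet G).ncard = m + r := by
      rw [hunion, Set.ncard_union_eq hdisj hIfin hOfin]
    -- m ≥ 2
    have hcent1 : Subgroup.centralizer ({1} : Set G) = ⊤ := by
      ext g
      simp [Subgroup.mem_centralizer_iff]
    have htopI : (⊤ : Subgroup G) ∈ I := ⟨1, C.one_mem, hcent1.symm⟩
    have hCI : C ∈ I := ⟨x, hxC, rfl⟩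
    have hm2 : 2 ≤ m := by
      have hsub2 : ({⊤, C} : Set (Subgroup G)) ⊆ I := by
        rintro E (rfl | rfl)
        · exact htopI
        · exact hCI
      have := Set.ncard_le_ncard hsub2 hIfin
      rwa [Set.ncard_pair (Ne.symm htopC)] at this
    -- the centralizers of the group ↥C
    have hsubcent : ∀ y : ↥C, (Subgroup.centralizer {(y : G)}).subgroupOf C
        = Subgroup.centralizer {y} := by
      intro y
      ext c
      rw [Subgroup.mem_subgroupOf]
      simp only [Subgroup.mem_centralizer_iff, Set.mem_singleton_iff, forall_eq]
      constructor
      · intro h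
        ext
        simpa using h
      · intro h
        simpa using congrArg Subtype.val h
    have hCc : centralizersSet ↥C = (fun E : Subgroup G => E.subgroupOf C) '' I := by
      ext H
      constructor
      · rintro ⟨y, rfl⟩
        exact ⟨Subgroup.centralizer {(y : G)}, ⟨(y : G), y.2, rfl⟩, hsubcent y⟩
      · rintro ⟨E, ⟨y, hy, rfl⟩, rfl⟩
        exact ⟨⟨y, hy⟩, hsubcent ⟨y, hy⟩⟩
    have hνfin : (centralizersSet ↥C).Finite := by
      rw [hCc]; exact hIfin.image _
    have hν : (centralizersSet ↥C).ncard ≤ m - 1 := by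
      have him : (fun E : Subgroup G => E.subgroupOf C) '' I
          = (fun E : Subgroup G => E.subgroupOf C) '' (I \ {⊤}) := by
        apply Set.Subset.antisymm
        · rintro _ ⟨E, hE, rfl⟩
          by_cases hEtop : E = ⊤
          · subst hEtop
            refine ⟨C, ⟨hCI, by simpa using htopC⟩, ?_⟩
            show C.subgroupOf C = (⊤ : Subgroup G).subgroupOf C
            rw [Subgroup.subgroupOf_self, Subgroup.subgroupOf_eq_top.mpr le_top]
          · exact ⟨E, ⟨hE, by simpa using hEtop⟩, rfl⟩
        · exact Set.image_mono Set.diff_subset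
      rw [hCc, him]
      calc ((fun E : Subgroup G => E.subgroupOf C) '' (I \ {⊤})).ncard
          ≤ (I \ {⊤}).ncard := Set.ncard_image_le hIfin.diff
        _ = m - 1 := by rw [Set.ncard_diff_singleton_of_mem htopI]
    -- relindex bookkeeping
    set q := (Subgroup.center G).relIndex A with hq
    set M := (Subgroup.center G).relIndex C with hM
    set Mc := A.relIndex C with hMcdef
    have hqMs : q * Mc = M := Subgroup.relIndex_mul_relIndex (hHK := hZA) (hKL := hAC)
    have hstN : M * t = N := by
      rw [← hN, ← hxt]
      exact Subgroup.relIndex_mul_index hZC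
    have hM0 : M ≠ 0 := by
      intro h
      rw [h, zero_mul] at hstN
      exact hN0 hstN.symm
    have hq0 : q ≠ 0 := by
      intro h
      rw [h, zero_mul] at hqMs
      exact hM0 hqMs.symm
    have hMc0 : Mc ≠ 0 := by
      intro h
      rw [h, mul_zero] at hqMs
      exact hM0 hqMs.symm
    have hq1 : q ≠ 1 := by
      intro h
      have hle : A ≤ Subgroup.center G := Subgroup.relIndex_eq_one.mp (hq.symm.trans h)
      exact hx (hle hxA)
    have hq2 : 2 ≤ q := by omega
    -- the center of ↥C is A.subgroupOf C
    have hcenterC : Subgroup.center ↥C = A.subgroupOf C := by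
      ext c
      rw [Subgroup.mem_center_iff, Subgroup.mem_subgroupOf]
      constructor
      · intro h
        rw [hA, Subgroup.mem_centralizer_iff]
        intro u hu
        have := h ⟨u, hu⟩
        simpa using congrArg Subtype.val this
      · intro h g
        ext
        have := Subgroup.mem_centralizer_iff.mp h (g : G) g.2
        simpa using this
    have hMC : (Subgroup.center ↥C).index = Mc := by
      rw [hcenterC]
      rfl
    have hMcN : Mc < N := by
      have h4M : 4 * Mc ≤ N := by
        calc 4 * Mc = 2 * Mc * 2 := by ring
          _ ≤ q * Mc * t := Nat.mul_le_mul (Nat.mul_le_mul_right _ hq2) ht2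
          _ = N := by rw [hqMs, hstN]
      have hMcpos : 0 < Mc := Nat.pos_of_ne_zero hMc0
      omega
    have hIH : Mc ≤ 4 ^ ((centralizersSet ↥C).ncard - 1) :=
      ih Mc hMcN ↥C hMC hMc0 hνfin
    -- the injection giving q ≤ r
    obtain ⟨g, hg⟩ : ∃ g : G, g ∉ C := by
      by_contra h
      push_neg at h
      exact htopC ((Subgroup.eq_top_iff' _).mpr h)
    have hga_out : ∀ a : ↥A, g * (a : G) ∉ C := by
      intro a h
      exact hg (by simpa using C.mul_mem h (C.inv_mem (hAC a.2)))
    set f' : (↥A ⧸ (Subgroup.center G).subgroupOf A) → ↥O := fun z =>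
      Quotient.liftOn' z
        (fun a : ↥A => (⟨Subgroup.centralizer {g * (a : G)},
          ⟨g * (a : G), hga_out a, rfl⟩⟩ : ↥O))
        (by
          intro a b hab
          have h1 : (a : G)⁻¹ * (b : G) ∈ Subgroup.center G := by
            have := QuotientGroup.leftRel_apply.mp hab
            rwa [Subgroup.mem_subgroupOf, Subgroup.coe_mul, Subgroup.coe_inv] at this
          apply Subtype.ext
          show Subgroup.centralizer {g * (a : G)} = Subgroup.centralizer {g * (b : G)}
          have hgb : g * (b : G) = (g * (a : G)) * ((a : G)⁻¹ * (b : G)) := by group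
          rw [hgb, centralizer_mul_center _ _ h1]) with hf'
    have hinj : Function.Injective f' := by
      intro z₁ z₂ h
      induction z₁ using Quotient.inductionOn' with
      | h a =>
        induction z₂ using Quotient.inductionOn' with
        | h b =>
          apply Quotient.sound'
          rw [QuotientGroup.leftRel_apply]
          rw [Subgroup.mem_subgroupOf, Subgroup.coe_mul, Subgroup.coe_inv]
          by_contra hw
          have hwA : (a : G)⁻¹ * (b : G) ∈ A := A.mul_mem (A.inv_mem a.2) b.2
          have hwC : Subgroup.centralizer {(a : G)⁻¹ * (b : G)} = C := hL1 _ hwA hw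
          have hE : Subgroup.centralizer {g * (a : G)}
              = Subgroup.centralizer {g * (b : G)} := congrArg Subtype.val h
          -- g * a commutes with g * b
          have hu : g * (a : G) ∈ Subgroup.centralizer {g * (b : G)} := by
            rw [← hE]
            exact self_mem_centralizer _
          have hcomm : (g * (b : G)) * (g * (a : G)) = (g * (a : G)) * (g * (b : G)) :=
            Subgroup.mem_centralizer_iff.mp hu _ rfl
          -- hence g * a commutes with w = a⁻¹ * b
          have huw : g * (a : G) ∈ Subgroup.centralizer {(a : G)⁻¹ * (b : G)} := by
            rw [Subgroup.mem_centralizer_iff]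
            rintro w' rfl
            have hwuv : (a : G)⁻¹ * (b : G) = (g * (a : G))⁻¹ * (g * (b : G)) := by group
            rw [hwuv]
            calc ((g * (a : G))⁻¹ * (g * (b : G))) * (g * (a : G))
                = (g * (a : G))⁻¹ * ((g * (b : G)) * (g * (a : G))) := by rw [mul_assoc]
              _ = (g * (a : G))⁻¹ * ((g * (a : G)) * (g * (b : G))) := by rw [hcomm]
              _ = (g * (b : G)) := by group
              _ = (g * (a : G)) * ((g * (a : G))⁻¹ * (g * (b : G))) := by group
          rw [hwC] at huw
          exact hg (by simpa using C.mul_mem huw (C.inv_mem (hAC a.2)))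
    have hqr : q ≤ r := by
      have hfinO : Finite ↥O := hOfin.to_subtype
      calc q = Nat.card (↥A ⧸ (Subgroup.center G).subgroupOf A) := rfl
        _ ≤ Nat.card ↥O := Nat.card_le_card_of_injective f' hinj
        _ = r := Nat.card_coe_set_eq O
    -- the covering argument giving t ≤ r + 1
    have hQfin : Finite (G ⧸ Subgroup.center G) := by
      apply Nat.finite_of_card_ne_zero
      have hcard : Nat.card (G ⧸ Subgroup.center G) = N := hN
      omega
    set π : G → G ⧸ Subgroup.center G := QuotientGroup.mk with hπ
    have hidx_ne : ∀ E : Subgroup G, Subgroup.center G ≤ E →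
        ((Subgroup.center G).subgroupOf E).index ≠ 0 := by
      intro E hZE h
      have hh := Subgroup.relIndex_mul_index hZE
      rw [hN] at hh
      have hrel : (Subgroup.center G).relIndex E = ((Subgroup.center G).subgroupOf E).index := rfl
      rw [hrel, h, zero_mul] at hh
      exact hN0 hh.symm
    have hsE : ∀ E ∈ O, (π '' (E : Set G)).ncard ≤ M := by
      rintro E ⟨w, hw, rfl⟩
      have hwZ : w ∉ Subgroup.center G := fun h => hw (hZC h)
      have hZE : Subgroup.center G ≤ Subgroup.centralizer {w} := Subgroup.center_le_centralizer _
      have h2 := ncard_image_quot_le (G := G) (Subgroup.centralizer {w}) (hidx_ne _ hZE)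
      refine h2.trans ?_
      have h3 : (Subgroup.center G).relIndex (Subgroup.centralizer {w})
          * (Subgroup.centralizer {w}).index = N := by
        rw [← hN]
        exact Subgroup.relIndex_mul_index hZE
      have h4 : t ≤ (Subgroup.centralizer {w}).index := hmin w hwZ
      have h5 : (Subgroup.center G).relIndex (Subgroup.centralizer {w}) * t ≤ M * t := by
        calc (Subgroup.center G).relIndex (Subgroup.centralizer {w}) * t
            ≤ (Subgroup.center G).relIndex (Subgroup.centralizer {w})
              * (Subgroup.centralizer {w}).index := Nat.mul_le_mul_left _ h4
          _ = N := h3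
          _ = M * t := hstN.symm
      exact Nat.le_of_mul_le_mul_right h5 htpos
    have hsC : (π '' (C : Set G)).ncard ≤ M := ncard_image_quot_le (G := G) C (hidx_ne C hZC)
    have hcover : (Set.univ \ (π '' (C : Set G))) ⊆ ⋃ E ∈ O, π '' (E : Set G) := by
      rintro z ⟨-, hz⟩
      obtain ⟨w, rfl⟩ := QuotientGroup.mk_surjective z
      have hw : w ∉ C := fun h => hz ⟨w, h, rfl⟩
      exact Set.mem_biUnion ⟨w, hw, rfl⟩ ⟨w, self_mem_centralizer w, rfl⟩
    have hcount : N - M ≤ r * M := by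
      have h5 : (Set.univ \ (π '' (C : Set G))).ncard ≤ r * M :=
        (Set.ncard_le_ncard hcover (Set.toFinite _)).trans
          (ncard_biUnion_le_mul hOfin _ M hsE)
      have h6 : (Set.univ \ (π '' (C : Set G))).ncard
          = Nat.card (G ⧸ Subgroup.center G) - (π '' (C : Set G)).ncard := by
        rw [Set.ncard_diff (Set.subset_univ _) (Set.toFinite _), Set.ncard_univ]
      have h7 : Nat.card (G ⧸ Subgroup.center G) = N := hN
      rw [h6, h7] at h5
      omega
    have htr : t ≤ r + 1 := by
      have hMpos : 0 < M := Nat.pos_of_ne_zero hM0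
      have h8 : M * t ≤ M * (r + 1) := by
        calc M * t = N := hstN
          _ ≤ r * M + M := by omega
          _ = M * (r + 1) := by ring
      exact Nat.le_of_mul_le_mul_left h8 hMpos
    -- final assembly
    obtain ⟨m', hm'⟩ : ∃ m', m = m' + 2 := ⟨m - 2, by omega⟩
    have hM4 : Mc ≤ 4 ^ m' := by
      refine hIH.trans (Nat.pow_le_pow_right (by norm_num) ?_)
      omega
    have hqt : q * t ≤ 4 ^ (r + 1) := by
      calc q * t ≤ 2 ^ q * 2 ^ t :=
            Nat.mul_le_mul (Nat.lt_two_pow_self (n := q)).le (Nat.lt_two_pow_self (n := t)).le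
        _ = 2 ^ (q + t) := (pow_add 2 q t).symm
        _ ≤ 2 ^ (2 * (r + 1)) := Nat.pow_le_pow_right (by norm_num) (by omega)
        _ = 4 ^ (r + 1) := by rw [pow_mul]; norm_num
    have hfinal : (centralizersSet G).ncard - 1 = m' + r + 1 := by omega
    rw [hfinal]
    calc N = (q * t) * Mc := by rw [← hstN, ← hqMs]; ring
      _ ≤ 4 ^ (r + 1) * 4 ^ m' := Nat.mul_le_mul hqt hM4
      _ = 4 ^ (m' + r + 1) := by rw [← pow_add]; congr 1; omega

/-- There is a constant `c > 0` such that any group with exactly `n` element-centralizers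
satisfies `|G : Z(G)| ≤ c ^ (n - 1)`. -/
theorem index_center_le_pow_card_centralizers :
    ∃ c : ℝ, 0 < c ∧ ∀ (n : ℕ), 0 < n → ∀ (G : Type) [Group G],
      (centralizersSet G).ncard = n →
        ((Subgroup.center G).index : ℝ) ≤ c ^ (n - 1) := by
  refine ⟨4, by norm_num, ?_⟩
  intro n hn G _ hG
  have hfin : (centralizersSet G).Finite := by
    by_contra h
    have := Set.Infinite.ncard h
    omega
  by_cases hidx : (Subgroup.center G).index = 0
  · rw [hidx]
    simp only [Nat.cast_zero]
    positivity
  · have hkey := key_bound _ G rfl hidx hfin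
    rw [hG] at hkey
    calc ((Subgroup.center G).index : ℝ) ≤ ((4 ^ (n - 1) : ℕ) : ℝ) := Nat.cast_le.mpr hkey
      _ = 4 ^ (n - 1) := by push_cast; ring
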